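/- Let n ≥ 3 with 3 dividing n, and let G be the simple graph whose vertex set is {u_k : k ∈ ZMod n} ∪ {v_k : k ∈ ZMod n}, whose edges are u_k–u_{k+1} and v_k–v_{k+1} for all k ∈ ZMod n (two disjoint n-cycles), together with a set R of additional 'radial' edges such that every edge of R joins u_k to v_k or joins u_k to v_{k+1} for some k (indices mod n), and no two edges of R share an endpoint. Then G admits a proper 4-total coloring in which all edges of R receive one common color. -/
import Mathlib

/-- A proper total coloring of `G`: `cv` colors the vertices, `ce` colors the edges
(as unordered pairs); adjacent vertices get different colors, an edge gets a color
different from both of its endpoints, and edges sharing an endpoint get different colors. -/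
def IsTotalColoring {V C : Type*} (G : SimpleGraph V) (cv : V → C) (ce : Sym2 V → C) : Prop :=
  (∀ ⦃u v : V⦄, G.Adj u v → cv u ≠ cv v) ∧
  (∀ ⦃u v : V⦄, G.Adj u v → ce s(u, v) ≠ cv u) ∧
  (∀ ⦃u v w : V⦄, G.Adj u v → G.Adj u w → v ≠ w → ce s(u, v) ≠ ce s(u, w))

/-- Two disjoint `n`-cycles (on `Sum.inl` and `Sum.inr` copies of `ZMod n`)
together with radial edges `u_k — v_m` for `(k, m) ∈ R`. -/
def twoLayerGraph (n : ℕ) (R : Set (ZMod n × ZMod n)) :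
    SimpleGraph (ZMod n ⊕ ZMod n) :=
  SimpleGraph.fromRel (fun a b =>
    match a, b with
    | Sum.inl x, Sum.inl y => y = x + 1
    | Sum.inr x, Sum.inr y => y = x + 1
    | Sum.inl x, Sum.inr y => (x, y) ∈ R
    | Sum.inr _, Sum.inl _ => False)

/-- 3-color of a `ZMod n` element, as an element of `Fin 4`. -/
def c3 {n : ℕ} (x : ZMod n) : Fin 4 := ⟨x.val % 3, by omega⟩

/-- Edge color function. -/
def eF {n : ℕ} : ZMod n ⊕ ZMod n → ZMod n ⊕ ZMod n → Fin 4
  | Sum.inl x, Sum.inl y =>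
      if y = x + 1 then c3 (x + 2) else if x = y + 1 then c3 (y + 2) else 0
  | Sum.inr x, Sum.inr y =>
      if y = x + 1 then c3 x else if x = y + 1 then c3 y else 0
  | _, _ => 3

lemma two_ne_zero_zmod {n : ℕ} (hn : 3 ≤ n) : (2 : ZMod n) ≠ 0 := by
  haveI : NeZero n := ⟨by omega⟩
  intro h
  have h2 : ((2 : ℕ) : ZMod n) = 0 := by exact_mod_cast h
  have hd := (ZMod.natCast_eq_zero_iff 2 n).mp h2
  have := Nat.le_of_dvd (by norm_num) hd
  omega

lemma self_ne_add_two {n : ℕ} (hn : 3 ≤ n) (x : ZMod n) : x ≠ x + 1 + 1 := by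
  intro h
  apply two_ne_zero_zmod hn
  have h2 : x + 1 + 1 = x + 2 := by ring
  rw [h2] at h
  rwa [left_eq_add] at h

lemma eF_symm {n : ℕ} (hn : 3 ≤ n) (a b : ZMod n ⊕ ZMod n) : eF a b = eF b a := by
  cases a with
  | inl x =>
    cases b with
    | inl y =>
      show (if y = x + 1 then c3 (x + 2) else if x = y + 1 then c3 (y + 2) else 0)
        = (if x = y + 1 then c3 (y + 2) else if y = x + 1 then c3 (x + 2) else 0)
      by_cases h1 : y = x + 1 <;> by_cases h2 : x = y + 1
      · exact absurd (h2.trans (by rw [h1])) (self_ne_add_two hn x)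
      · simp only [if_pos h1, if_neg h2]
      · simp only [if_neg h1, if_pos h2]
      · simp only [if_neg h1, if_neg h2]
    | inr y => rfl
  | inr x =>
    cases b with
    | inl y => rfl
    | inr y =>
      show (if y = x + 1 then c3 x else if x = y + 1 then c3 y else 0)
        = (if x = y + 1 then c3 y else if y = x + 1 then c3 x else 0)
      by_cases h1 : y = x + 1 <;> by_cases h2 : x = y + 1
      · exact absurd (h2.trans (by rw [h1])) (self_ne_add_two hn x)
      · simp only [if_pos h1, if_neg h2]
      · simp only [if_neg h1, if_pos h2]
      · simp only [if_neg h1, if_neg h2]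

lemma val_step {n : ℕ} (hn : 3 ≤ n) (h3 : 3 ∣ n) (x : ZMod n) :
    (x + 1).val % 3 = (x.val + 1) % 3 := by
  haveI : NeZero n := ⟨by omega⟩
  haveI : Fact (1 < n) := ⟨by omega⟩
  rw [ZMod.val_add, ZMod.val_one, Nat.mod_mod_of_dvd _ h3]

lemma eF_inl_succ {n : ℕ} (x : ZMod n) :
    eF (Sum.inl x) (Sum.inl (x + 1)) = c3 (x + 2) := by
  show (if x + 1 = x + 1 then c3 (x + 2) else if x = (x + 1) + 1 then c3 ((x + 1) + 2) else 0)
    = c3 (x + 2)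
  rw [if_pos rfl]

lemma eF_inl_pred {n : ℕ} (hn : 3 ≤ n) (x : ZMod n) :
    eF (Sum.inl (x + 1)) (Sum.inl x) = c3 (x + 2) := by
  show (if x = (x + 1) + 1 then c3 ((x + 1) + 2) else if x + 1 = x + 1 then c3 (x + 2) else 0)
    = c3 (x + 2)
  rw [if_neg (self_ne_add_two hn x), if_pos rfl]

lemma eF_inr_succ {n : ℕ} (x : ZMod n) :
    eF (Sum.inr x) (Sum.inr (x + 1)) = c3 x := by
  show (if x + 1 = x + 1 then c3 x else if x = (x + 1) + 1 then c3 (x + 1) else 0) = c3 x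
  rw [if_pos rfl]

lemma eF_inr_pred {n : ℕ} (hn : 3 ≤ n) (x : ZMod n) :
    eF (Sum.inr (x + 1)) (Sum.inr x) = c3 x := by
  show (if x = (x + 1) + 1 then c3 (x + 1) else if x + 1 = x + 1 then c3 x else 0) = c3 x
  rw [if_neg (self_ne_add_two hn x), if_pos rfl]


lemma lift_eF {n : ℕ} (hn : 3 ≤ n) (a b : ZMod n ⊕ ZMod n) :
    Sym2.lift ⟨eF, eF_symm hn⟩ s(a, b) = eF a b := rfl

theorem twoLayer_four_total_coloring_radial_monochromatic (n : ℕ) (hn : 3 ≤ n) (h3 : 3 ∣ n)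
    (R : Set (ZMod n × ZMod n))
    (hR : ∀ p ∈ R, p.2 = p.1 ∨ p.2 = p.1 + 1)
    (hMatching : ∀ p ∈ R, ∀ q ∈ R, p ≠ q → p.1 ≠ q.1 ∧ p.2 ≠ q.2) :
    ∃ (cv : ZMod n ⊕ ZMod n → Fin 4) (ce : Sym2 (ZMod n ⊕ ZMod n) → Fin 4) (t : Fin 4),
      IsTotalColoring (twoLayerGraph n R) cv ce ∧
      ∀ p ∈ R, ce s(Sum.inl p.1, Sum.inr p.2) = t := by
  haveI : NeZero n := ⟨by omega⟩
  have key : ∀ x : ZMod n, (x + 1).val % 3 = (x.val + 1) % 3 := val_step hn h3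
  have key2 : ∀ x : ZMod n, (x + 2).val % 3 = (x.val + 2) % 3 := by
    intro x
    have h : x + 2 = (x + 1) + 1 := by ring
    rw [h, key (x + 1)]
    have := key x
    omega
  have hlt : ∀ x : ZMod n, x.val % 3 < 3 := fun x => Nat.mod_lt _ (by omega)
  have hne01 : ∀ x : ZMod n, c3 x ≠ c3 (x + 1) := by
    intro x h
    have h' := congrArg Fin.val h
    simp only [c3] at h'
    rw [key x] at h'
    omega
  have hne02 : ∀ x : ZMod n, c3 x ≠ c3 (x + 2) := by
    intro x h
    have h' := congrArg Fin.val h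
    simp only [c3] at h'
    rw [key2 x] at h'
    omega
  have hne12 : ∀ x : ZMod n, c3 (x + 1) ≠ c3 (x + 2) := by
    intro x h
    have h' := congrArg Fin.val h
    simp only [c3] at h'
    rw [key x, key2 x] at h'
    omega
  have hne3 : ∀ x : ZMod n, c3 x ≠ 3 := by
    intro x h
    have h' := congrArg Fin.val h
    simp only [c3] at h'
    rw [show ((3 : Fin 4) : Fin 4).val = 3 from rfl] at h'
    have := hlt x
    omega
  refine ⟨Sum.elim c3 (fun x => c3 (x + 1)), Sym2.lift ⟨eF, eF_symm hn⟩, 3, ⟨?_, ?_, ?_⟩, ?_⟩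
  · -- adjacent vertices get different colors
    intro u v hadj
    simp only [twoLayerGraph, SimpleGraph.fromRel_adj] at hadj
    obtain ⟨hne, h⟩ := hadj
    cases u with
    | inl x =>
      cases v with
      | inl y =>
        replace h : y = x + 1 ∨ x = y + 1 := h
        show c3 x ≠ c3 y
        rcases h with h | h
        · subst h; exact hne01 x
        · subst h; exact (hne01 y).symm
      | inr m =>
        replace h : (x, m) ∈ R := by rcases h with h | h; exact h; exact h.elim
        show c3 x ≠ c3 (m + 1)
        rcases hR _ h with hm | hm <;> simp only at hm <;> rw [hm]
        · exact hne01 x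
        · rw [show (x : ZMod n) + 1 + 1 = x + 2 from by ring]
          exact hne02 x
    | inr m =>
      cases v with
      | inl x =>
        replace h : (x, m) ∈ R := by rcases h with h | h; exact h.elim; exact h
        show c3 (m + 1) ≠ c3 x
        rcases hR _ h with hm | hm <;> simp only at hm <;> rw [hm]
        · exact (hne01 x).symm
        · rw [show (x : ZMod n) + 1 + 1 = x + 2 from by ring]
          exact (hne02 x).symm
      | inr y =>
        replace h : y = m + 1 ∨ m = y + 1 := h
        show c3 (m + 1) ≠ c3 (y + 1)
        rcases h with h | h
        · subst h; exact hne01 (m + 1)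
        · subst h; exact (hne01 (y + 1)).symm
  · -- edge color differs from endpoint color
    intro u v hadj
    simp only [twoLayerGraph, SimpleGraph.fromRel_adj] at hadj
    obtain ⟨hne, h⟩ := hadj
    rw [lift_eF hn]
    cases u with
    | inl x =>
      cases v with
      | inl y =>
        replace h : y = x + 1 ∨ x = y + 1 := h
        rcases h with h | h
        · subst h
          rw [eF_inl_succ]
          exact (hne02 x).symm
        · subst h
          rw [eF_inl_pred hn]
          show c3 (y + 2) ≠ c3 (y + 1)
          exact (hne12 y).symm
      | inr m =>
        show (3 : Fin 4) ≠ c3 x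
        exact (hne3 x).symm
    | inr m =>
      cases v with
      | inl x =>
        show (3 : Fin 4) ≠ c3 (m + 1)
        exact (hne3 (m + 1)).symm
      | inr y =>
        replace h : y = m + 1 ∨ m = y + 1 := h
        rcases h with h | h
        · subst h
          rw [eF_inr_succ]
          show c3 m ≠ c3 (m + 1)
          exact hne01 m
        · subst h
          rw [eF_inr_pred hn]
          show c3 y ≠ c3 (y + 1 + 1)
          rw [show (y : ZMod n) + 1 + 1 = y + 2 from by ring]
          exact hne02 y
  · -- edges sharing an endpoint get different colors
    intro u v w h1 h2 hvw
    simp only [twoLayerGraph, SimpleGraph.fromRel_adj] at h1 h2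
    obtain ⟨hnuv, ha1⟩ := h1
    obtain ⟨hnuw, ha2⟩ := h2
    rw [lift_eF hn, lift_eF hn]
    cases u with
    | inl x =>
      cases v with
      | inl a =>
        replace ha1 : a = x + 1 ∨ x = a + 1 := ha1
        cases w with
        | inl b =>
          replace ha2 : b = x + 1 ∨ x = b + 1 := ha2
          rcases ha1 with h1 | h1 <;> rcases ha2 with h2 | h2
          · exact absurd (by rw [h1, h2]) hvw
          · subst h1; subst h2
            rw [eF_inl_succ, eF_inl_pred hn]
            rw [show (b : ZMod n) + 1 + 2 = (b + 2) + 1 from by ring]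
            exact (hne01 (b + 2)).symm
          · subst h2; subst h1
            rw [eF_inl_pred hn, eF_inl_succ]
            rw [show (a : ZMod n) + 1 + 2 = (a + 2) + 1 from by ring]
            exact hne01 (a + 2)
          · exfalso
            have hab : a = b := add_right_cancel (h1.symm.trans h2)
            exact hvw (by rw [hab])
        | inr m =>
          rw [show eF (Sum.inl x) (Sum.inr m) = 3 from rfl]
          rcases ha1 with h1 | h1
          · subst h1; rw [eF_inl_succ]; exact hne3 (x + 2)
          · subst h1; rw [eF_inl_pred hn]; exact hne3 (a + 2)
      | inr m1 =>
        replace ha1 : (x, m1) ∈ R := by rcases ha1 with h | h; exact h; exact h.elim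
        rw [show eF (Sum.inl x) (Sum.inr m1) = 3 from rfl]
        cases w with
        | inl b =>
          replace ha2 : b = x + 1 ∨ x = b + 1 := ha2
          rcases ha2 with h2 | h2
          · subst h2; rw [eF_inl_succ]; exact (hne3 (x + 2)).symm
          · subst h2; rw [eF_inl_pred hn]; exact (hne3 (b + 2)).symm
        | inr m2 =>
          exfalso
          replace ha2 : (x, m2) ∈ R := by rcases ha2 with h | h; exact h; exact h.elim
          have hm : m1 ≠ m2 := fun h => hvw (by rw [h])
          exact (hMatching (x, m1) ha1 (x, m2) ha2
            (fun h => hm (congrArg Prod.snd h))).1 rfl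
    | inr y =>
      cases v with
      | inl a =>
        replace ha1 : (a, y) ∈ R := by rcases ha1 with h | h; exact h.elim; exact h
        rw [show eF (Sum.inr y) (Sum.inl a) = 3 from rfl]
        cases w with
        | inl b =>
          exfalso
          replace ha2 : (b, y) ∈ R := by rcases ha2 with h | h; exact h.elim; exact h
          have hm : a ≠ b := fun h => hvw (by rw [h])
          exact (hMatching (a, y) ha1 (b, y) ha2
            (fun h => hm (congrArg Prod.fst h))).2 rfl
        | inr b =>
          replace ha2 : b = y + 1 ∨ y = b + 1 := ha2
          rcases ha2 with h2 | h2
          · subst h2; rw [eF_inr_succ]; exact (hne3 y).symm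
          · subst h2; rw [eF_inr_pred hn]; exact (hne3 b).symm
      | inr a =>
        replace ha1 : a = y + 1 ∨ y = a + 1 := ha1
        cases w with
        | inl b =>
          replace ha2 : (b, y) ∈ R := by rcases ha2 with h | h; exact h.elim; exact h
          rw [show eF (Sum.inr y) (Sum.inl b) = 3 from rfl]
          rcases ha1 with h1 | h1
          · subst h1; rw [eF_inr_succ]; exact hne3 y
          · subst h1; rw [eF_inr_pred hn]; exact hne3 a
        | inr b =>
          replace ha2 : b = y + 1 ∨ y = b + 1 := ha2
          rcases ha1 with h1 | h1 <;> rcases ha2 with h2 | h2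
          · exact absurd (by rw [h1, h2]) hvw
          · subst h1; subst h2
            rw [eF_inr_succ, eF_inr_pred hn]
            exact (hne01 b).symm
          · subst h2; subst h1
            rw [eF_inr_pred hn, eF_inr_succ]
            exact hne01 a
          · exfalso
            have hab : a = b := add_right_cancel (h1.symm.trans h2)
            exact hvw (by rw [hab])
  · intro p hp
    rfl
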